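/- For σ > 0 and c ∈ ℝ, the function q(τ, x) = ∫_0^τ Ω(k)·(x − c)/(4σ³√(π(τ−k)³))·exp(−(x−c)²/(4σ²(τ−k))) dk, with Ω continuous and y(k) ≡ c constant, satisfies the heat equation ∂q/∂τ = σ²·∂²q/∂x² for all x ≠ c and τ > 0. -/

import Mathlib

open Real MeasureTheory Filter Metric

noncomputable def gk (b : ℝ) (m : ℕ) (s : ℝ) : ℝ := Real.exp (-b / s) / Real.sqrt s ^ m

lemma gk_nonneg (b : ℝ) (m : ℕ) (s : ℝ) : 0 ≤ gk b m s :=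
  div_nonneg (Real.exp_nonneg _) (pow_nonneg (Real.sqrt_nonneg _) _)

lemma gk_of_nonpos {m : ℕ} (b : ℝ) (hm : m ≠ 0) {s : ℝ} (hs : s ≤ 0) : gk b m s = 0 := by
  have h : Real.sqrt s = 0 := Real.sqrt_eq_zero'.mpr hs
  simp [gk, h, zero_pow hm]

lemma pow_div_factorial_le_exp {x : ℝ} (hx : 0 ≤ x) (m : ℕ) :
    x ^ m / (Nat.factorial m : ℝ) ≤ Real.exp x := by
  refine le_trans ?_ (Real.sum_le_exp_of_nonneg hx (m + 1))
  exact Finset.single_le_sum (f := fun i => x ^ i / (Nat.factorial i : ℝ))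
    (fun i _ => by positivity) (Finset.self_mem_range_succ m)

lemma gk_le_aux {b : ℝ} (hb : 0 < b) {m : ℕ} (hm : m ≠ 0) (s : ℝ) :
    gk b m s ≤ (Nat.factorial (m+1) : ℝ) / b ^ (m + 1) * Real.sqrt s ^ (m + 2) := by
  rcases le_or_gt s 0 with hs | hs
  · rw [gk_of_nonpos b hm hs]
    positivity
  · have hr : 0 < Real.sqrt s := Real.sqrt_pos.mpr hs
    have hr2 : Real.sqrt s ^ 2 = s := Real.sq_sqrt hs.le
    have h1 : (b / s) ^ (m + 1) / (Nat.factorial (m+1) : ℝ) ≤ Real.exp (b / s) :=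
      pow_div_factorial_le_exp (by positivity) (m + 1)
    have h2 : Real.exp (-b / s) ≤ (Nat.factorial (m+1) : ℝ) * s ^ (m+1) / b ^ (m+1) := by
      have h3 : (0:ℝ) < (b / s) ^ (m + 1) / (Nat.factorial (m+1) : ℝ) := by positivity
      have h4 := one_div_le_one_div_of_le h3 h1
      rw [neg_div, Real.exp_neg]
      calc (Real.exp (b/s))⁻¹ = 1 / Real.exp (b/s) := (one_div _).symm
        _ ≤ 1 / ((b / s) ^ (m + 1) / (Nat.factorial (m+1) : ℝ)) := h4
        _ = (Nat.factorial (m+1) : ℝ) * s ^ (m+1) / b ^ (m+1) := by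
            rw [div_pow]
            field_simp
    calc gk b m s ≤ ((Nat.factorial (m+1) : ℝ) * s ^ (m+1) / b ^ (m+1)) / Real.sqrt s ^ m :=
          (div_le_div_iff_of_pos_right (pow_pos hr m)).mpr h2
      _ = (Nat.factorial (m+1) : ℝ) / b ^ (m + 1) * Real.sqrt s ^ (m + 2) := by
          rw [← hr2, ← pow_mul]
          field_simp
          rw [Real.sqrt_sq hr.le]
          ring

lemma gk_bound {b₀ b : ℝ} (hb₀ : 0 < b₀) (hb : b₀ ≤ b) {m : ℕ} (hm : m ≠ 0) (s : ℝ) :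
    gk b m s ≤ max 1 ((Nat.factorial (m+1) : ℝ) / b₀ ^ (m + 1)) := by
  have hbpos : 0 < b := lt_of_lt_of_le hb₀ hb
  rcases le_or_gt s 1 with hs | hs
  · refine le_trans (gk_le_aux hbpos hm s) (le_trans ?_ (le_max_right _ _))
    have h1 : Real.sqrt s ^ (m + 2) ≤ 1 := by
      apply pow_le_one₀ (Real.sqrt_nonneg _)
      exact Real.sqrt_le_one.mpr hs
    calc (Nat.factorial (m+1) : ℝ) / b ^ (m+1) * Real.sqrt s ^ (m + 2)
        ≤ (Nat.factorial (m+1) : ℝ) / b ^ (m+1) * 1 := by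
          apply mul_le_mul_of_nonneg_left h1 (by positivity)
      _ ≤ (Nat.factorial (m+1) : ℝ) / b₀ ^ (m + 1) := by
          rw [mul_one]
          apply div_le_div_of_nonneg_left (by positivity) (by positivity)
          exact pow_le_pow_left₀ hb₀.le hb _
  · refine le_trans ?_ (le_max_left _ _)
    have h1 : Real.exp (-b / s) ≤ 1 := by
      rw [Real.exp_le_one_iff]
      have : (0:ℝ) < s := lt_trans one_pos hs
      rw [neg_div]
      simp only [neg_nonpos]
      positivity
    have h2 : (1:ℝ) ≤ Real.sqrt s ^ m := one_le_pow₀ (Real.one_le_sqrt.mpr hs.le)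
    rw [gk, div_le_one (lt_of_lt_of_le one_pos h2)]
    exact le_trans h1 h2

lemma gk_tendsto {b : ℝ} (hb : 0 < b) {m : ℕ} (hm : m ≠ 0) :
    Tendsto (gk b m) (nhds 0) (nhds 0) := by
  apply squeeze_zero (t₀ := nhds 0) (gk_nonneg b m) (gk_le_aux hb hm)
  have : Tendsto (fun s : ℝ => (Nat.factorial (m+1) : ℝ) / b ^ (m + 1) * Real.sqrt s ^ (m + 2))
      (nhds 0) (nhds ((Nat.factorial (m+1) : ℝ) / b ^ (m + 1) * Real.sqrt 0 ^ (m + 2))) := by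
    exact (continuous_const.mul ((Real.continuous_sqrt).pow _)).tendsto 0
  simpa [Real.sqrt_zero, zero_pow (by omega : m + 2 ≠ 0)] using this

lemma hasDerivAt_gk {b : ℝ} (hb : 0 < b) {m : ℕ} (hm : m ≠ 0) (s : ℝ) :
    HasDerivAt (gk b m) (b * gk b (m+4) s - (m : ℝ)/2 * gk b (m+2) s) s := by
  rcases lt_trichotomy s 0 with hs | rfl | hs
  · have hz : gk b m =ᶠ[nhds s] fun _ => (0:ℝ) := by
      filter_upwards [Iio_mem_nhds hs] with t ht
      exact gk_of_nonpos b hm (le_of_lt ht)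
    have h0 : HasDerivAt (fun _ : ℝ => (0:ℝ)) 0 s := hasDerivAt_const s 0
    have := h0.congr_of_eventuallyEq hz
    refine this.congr_deriv ?_
    rw [gk_of_nonpos b (by omega) hs.le, gk_of_nonpos b (by omega) hs.le]
    ring
  · rw [gk_of_nonpos b (by omega) le_rfl, gk_of_nonpos b (by omega) le_rfl]
    have hrhs : b * 0 - (m:ℝ)/2 * 0 = 0 := by ring
    rw [hrhs]
    rw [hasDerivAt_iff_tendsto_slope]
    have hcong : slope (gk b m) 0 =ᶠ[nhdsWithin 0 {(0:ℝ)}ᶜ] gk b (m+2) := by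
      apply Filter.eventuallyEq_of_mem self_mem_nhdsWithin
      intro t ht
      simp only [Set.mem_compl_iff, Set.mem_singleton_iff] at ht
      rw [slope_def_field, gk_of_nonpos b hm le_rfl]
      rcases lt_or_gt_of_ne ht with htn | htp
      · rw [gk_of_nonpos b hm htn.le, gk_of_nonpos b (by omega) htn.le]
        simp
      · have hr : 0 < Real.sqrt t := Real.sqrt_pos.mpr htp
        have hr2 : Real.sqrt t ^ 2 = t := Real.sq_sqrt htp.le
        simp only [sub_zero, gk]
        rw [div_div, pow_add, hr2]
    refine Tendsto.congr' hcong.symm ?_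
    have := (gk_tendsto hb (by omega : m + 2 ≠ 0)).mono_left
      (nhdsWithin_le_nhds (s := {(0:ℝ)}ᶜ))
    simpa using this
  · have hs' : s ≠ 0 := ne_of_gt hs
    have hr : 0 < Real.sqrt s := Real.sqrt_pos.mpr hs
    have hr2 : Real.sqrt s ^ 2 = s := Real.sq_sqrt hs.le
    obtain ⟨n, rfl⟩ := Nat.exists_eq_succ_of_ne_zero hm
    have hd0 : HasDerivAt (fun t : ℝ => -b / t) (b / s ^ 2) s := by
      have h := (hasDerivAt_inv hs').const_mul (-b)
      have heq : (fun t : ℝ => -b * t⁻¹) = fun t : ℝ => -b / t := by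
        funext t; rw [div_eq_mul_inv]
      rw [heq] at h
      refine h.congr_deriv ?_
      field_simp
    have hd1 : HasDerivAt (fun t : ℝ => Real.exp (-b / t))
        (Real.exp (-b / s) * (b / s ^ 2)) s := hd0.exp
    have hd2 : HasDerivAt (fun t : ℝ => Real.sqrt t ^ (n+1))
        ((↑(n+1) : ℝ) * Real.sqrt s ^ n * (1 / (2 * Real.sqrt s))) s := by
      have h := (Real.hasDerivAt_sqrt hs').pow (n+1)
      exact h.congr_deriv (by simp)
    have hd3 := hd1.div hd2 (pow_ne_zero _ hr.ne')
    refine hd3.congr_deriv ?_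
    symm
    simp only [gk]
    have hs2 : Real.sqrt s ^ 4 = s ^ 2 := by
      rw [show (4:ℕ) = 2*2 from rfl, pow_mul, hr2]
    have hrne : Real.sqrt s ≠ 0 := hr.ne'
    field_simp
    rw [← hs2]
    simp only [Nat.succ_eq_add_one]
    ring

lemma hasDerivAt_gk_b {m : ℕ} (hm : m ≠ 0) (b s : ℝ) :
    HasDerivAt (fun b' => gk b' m s) (-(gk b (m+2) s)) b := by
  rcases le_or_gt s 0 with hs | hs
  · have h : (fun b' => gk b' m s) = fun _ => (0:ℝ) := by
      funext b'; exact gk_of_nonpos b' hm hs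
    rw [h, gk_of_nonpos b (by omega) hs, neg_zero]
    exact hasDerivAt_const b 0
  · have hr : 0 < Real.sqrt s := Real.sqrt_pos.mpr hs
    have hr2 : Real.sqrt s ^ 2 = s := Real.sq_sqrt hs.le
    have hd0 : HasDerivAt (fun b' : ℝ => -b' / s) (-1 / s) b := by
      simpa using ((hasDerivAt_id b).neg.div_const s)
    have hd1 : HasDerivAt (fun b' : ℝ => Real.exp (-b' / s))
        (Real.exp (-b / s) * (-1 / s)) b := hd0.exp
    have hd2 := hd1.div_const (Real.sqrt s ^ m)
    refine hd2.congr_deriv ?_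
    symm
    simp only [gk]
    rw [← hr2]
    have hrne : Real.sqrt s ≠ 0 := hr.ne'
    field_simp
    rw [pow_add, hr2]
    ring_nf
    rw [hr2]

lemma gk_continuous {b : ℝ} (hb : 0 < b) {m : ℕ} (hm : m ≠ 0) : Continuous (gk b m) :=
  continuous_iff_continuousAt.mpr fun s => (hasDerivAt_gk hb hm s).continuousAt

set_option maxHeartbeats 1600000 in
theorem stmt_18 (σ c : ℝ) (hσ : 0 < σ) (Ω : ℝ → ℝ) (hΩ : Continuous Ω)
    (q : ℝ → ℝ → ℝ)
    (hq : ∀ τ x, q τ x = ∫ k in (0:ℝ)..τ,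
        Ω k * (x - c) / (4 * σ ^ 3 * Real.sqrt (π * (τ - k) ^ 3))
          * Real.exp (-(x - c) ^ 2 / (4 * σ ^ 2 * (τ - k)))) :
    ∀ τ x, 0 < τ → x ≠ c →
      deriv (fun τ' => q τ' x) τ = σ ^ 2 * deriv (deriv (fun x' => q τ x')) x := by
  intro τ x hτ hx
  have hσ' : σ ≠ 0 := ne_of_gt hσ
  have hsp : 0 < Real.sqrt π := Real.sqrt_pos.mpr Real.pi_pos
  set C₀ : ℝ := (4 * σ ^ 3 * Real.sqrt π)⁻¹ with hC₀def
  have hC₀ : 0 < C₀ := by rw [hC₀def]; positivity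
  have ha : x - c ≠ 0 := sub_ne_zero.mpr hx
  have haa : 0 < |x - c| := abs_pos.mpr ha
  have ha2 : 0 < (x - c) ^ 2 := by rw [← sq_abs]; positivity
  set B : ℝ → ℝ := fun y => (y - c) ^ 2 / (4 * σ ^ 2) with hBdef
  set b : ℝ := B x with hbdef
  have hb : 0 < b := by rw [hbdef, hBdef]; positivity
  set T : ℝ := τ + 1 with hTdef
  have hτT : τ < T := by rw [hTdef]; linarith
  have hT : 0 < T := by linarith
  -- key algebraic rewriting of the integrand
  have hfg : ∀ (t k y : ℝ),
      Ω k * (y - c) / (4 * σ ^ 3 * Real.sqrt (π * (t - k) ^ 3))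
        * Real.exp (-(y - c) ^ 2 / (4 * σ ^ 2 * (t - k)))
      = Ω k * C₀ * ((y - c) * gk (B y) 3 (t - k)) := by
    intro t k y
    have hsq : Real.sqrt (π * (t - k) ^ 3) = Real.sqrt π * Real.sqrt (t - k) ^ 3 := by
      rw [Real.sqrt_mul Real.pi_pos.le]
      congr 1
      rcases le_or_gt (t - k) 0 with h | h
      · rw [Real.sqrt_eq_zero'.mpr (by nlinarith [sq_nonneg (t - k)] : (t - k) ^ 3 ≤ 0),
          Real.sqrt_eq_zero'.mpr h]
        norm_num
      · rw [show (3:ℕ) = 2 + 1 from rfl, pow_succ,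
          Real.sqrt_mul (by positivity : (0:ℝ) ≤ (t - k) ^ 2), Real.sqrt_sq h.le,
          pow_succ, Real.sq_sqrt h.le]
    have hexp : -(y - c) ^ 2 / (4 * σ ^ 2 * (t - k))
        = -((y - c) ^ 2 / (4 * σ ^ 2)) / (t - k) := by
      rw [neg_div, neg_div, div_div]
    rw [hsq, hexp]
    simp only [hBdef, gk]
    rcases eq_or_ne (Real.sqrt (t - k)) 0 with h | h
    · rw [h]
      norm_num
    · rw [hC₀def]
      field_simp
  have hgkcont : ∀ (b' : ℝ), 0 < b' → ∀ m : ℕ, m ≠ 0 → Continuous (gk b' m) :=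
    fun b' hb' m hm => gk_continuous hb' hm
  -- the integrand functions
  set F : ℝ → ℝ → ℝ := fun t k => Ω k * C₀ * ((x - c) * gk b 3 (t - k)) with hFdef
  set F' : ℝ → ℝ → ℝ := fun t k =>
    Ω k * C₀ * ((x - c) * (b * gk b 7 (t - k) - (3:ℝ)/2 * gk b 5 (t - k))) with hF'def
  set G : ℝ → ℝ → ℝ := fun y k => Ω k * C₀ * ((y - c) * gk (B y) 3 (τ - k)) with hGdef
  set G' : ℝ → ℝ → ℝ := fun y k =>
    Ω k * C₀ * (gk (B y) 3 (τ - k) - (y - c) ^ 2 / (2 * σ ^ 2) * gk (B y) 5 (τ - k)) with hG'def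
  set G'' : ℝ → ℝ → ℝ := fun y k =>
    Ω k * C₀ * ((y - c) * ((y - c) ^ 2 / (4 * σ ^ 4) * gk (B y) 7 (τ - k)
      - 3 / (2 * σ ^ 2) * gk (B y) 5 (τ - k))) with hG''def
  have hsubc : Continuous fun k : ℝ => τ - k := continuous_const.sub continuous_id
  have hFcont : ∀ t, Continuous (F t) := fun t =>
    (hΩ.mul continuous_const).mul (continuous_const.mul
      ((hgkcont b hb 3 (by norm_num)).comp (continuous_const.sub continuous_id)))
  have hF'cont : Continuous (F' τ) :=
    (hΩ.mul continuous_const).mul (continuous_const.mul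
      (((continuous_const.mul ((hgkcont b hb 7 (by norm_num)).comp hsubc))).sub
        (continuous_const.mul ((hgkcont b hb 5 (by norm_num)).comp hsubc))))
  have hGcont : ∀ y, 0 < B y → Continuous (G y) := fun y hBy =>
    (hΩ.mul continuous_const).mul (continuous_const.mul
      ((hgkcont (B y) hBy 3 (by norm_num)).comp hsubc))
  have hG'cont : ∀ y, 0 < B y → Continuous (G' y) := fun y hBy =>
    (hΩ.mul continuous_const).mul
      ((((hgkcont (B y) hBy 3 (by norm_num)).comp hsubc)).sub
        (continuous_const.mul ((hgkcont (B y) hBy 5 (by norm_num)).comp hsubc)))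
  have hG''cont : Continuous (G'' x) :=
    (hΩ.mul continuous_const).mul (continuous_const.mul
      (((continuous_const.mul ((hgkcont b hb 7 (by norm_num)).comp hsubc))).sub
        (continuous_const.mul ((hgkcont b hb 5 (by norm_num)).comp hsubc))))
  -- q as an integral over the fixed interval [0, T]
  have hqT : ∀ t, 0 < t → t ≤ T → q t x = ∫ k in (0:ℝ)..T, F t k := by
    intro t ht htT
    rw [hq t x]
    have h1 : (fun k => Ω k * (x - c) / (4 * σ ^ 3 * Real.sqrt (π * (t - k) ^ 3))
        * Real.exp (-(x - c) ^ 2 / (4 * σ ^ 2 * (t - k)))) = F t := by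
      funext k
      rw [hfg t k x]
    rw [h1]
    rw [← intervalIntegral.integral_add_adjacent_intervals
      ((hFcont t).intervalIntegrable 0 t) ((hFcont t).intervalIntegrable t T)]
    have h2 : ∫ k in t..T, F t k = 0 := by
      have heq : Set.EqOn (F t) (fun _ => (0:ℝ)) (Set.uIcc t T) := by
        intro k hk
        rw [Set.uIcc_of_le htT] at hk
        show Ω k * C₀ * ((x - c) * gk b 3 (t - k)) = 0
        rw [gk_of_nonpos b (by norm_num) (by linarith [hk.1])]
        ring
      rw [intervalIntegral.integral_congr heq]
      simp
    rw [h2, add_zero]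
  -- bound for Ω on [0, T]
  obtain ⟨M, hM⟩ := (isCompact_Icc (a := (0:ℝ)) (b := T)).exists_bound_of_continuousOn
    hΩ.continuousOn
  -- τ-derivative
  have key1 : HasDerivAt (fun t => ∫ k in (0:ℝ)..T, F t k)
      (∫ k in (0:ℝ)..T, F' τ k) τ := by
    set K7 : ℝ := max 1 ((Nat.factorial 8 : ℝ) / b ^ 8) with hK7def
    set K5 : ℝ := max 1 ((Nat.factorial 6 : ℝ) / b ^ 6) with hK5def
    have hK7 : ∀ s, gk b 7 s ≤ K7 := fun s => gk_bound hb le_rfl (by norm_num) s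
    have hK5 : ∀ s, gk b 5 s ≤ K5 := fun s => gk_bound hb le_rfl (by norm_num) s
    have hK7p : 0 < K7 := lt_of_lt_of_le one_pos (le_max_left _ _)
    have hK5p : 0 < K5 := lt_of_lt_of_le one_pos (le_max_left _ _)
    have hbound : ∀ᵐ k ∂(volume : Measure ℝ), k ∈ Set.uIoc (0:ℝ) T →
        ∀ t ∈ ball τ 1, ‖F' t k‖ ≤ M * (C₀ * (|x - c| * (b * K7 + (3:ℝ)/2 * K5))) := by
      apply ae_of_all
      intro k hk t _
      have hkIcc : k ∈ Set.Icc 0 T := by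
        rw [Set.uIoc_of_le hT.le] at hk
        exact ⟨hk.1.le, hk.2⟩
      have hMk := hM k hkIcc
      rw [Real.norm_eq_abs] at hMk ⊢
      have habs : |F' t k| = |Ω k| * (C₀ *
          (|x - c| * |b * gk b 7 (t - k) - (3:ℝ)/2 * gk b 5 (t - k)|)) := by
        show |Ω k * C₀ * ((x - c) * (b * gk b 7 (t - k) - (3:ℝ)/2 * gk b 5 (t - k)))| = _
        rw [abs_mul, abs_mul, abs_mul, abs_of_pos hC₀]
        ring
      rw [habs]
      have hX : |b * gk b 7 (t - k) - (3:ℝ)/2 * gk b 5 (t - k)| ≤ b * K7 + (3:ℝ)/2 * K5 := by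
        refine le_trans (abs_sub _ _) ?_
        rw [abs_mul, abs_mul, abs_of_pos hb, abs_of_nonneg (gk_nonneg b 7 _),
          abs_of_nonneg (gk_nonneg b 5 _), abs_of_pos (by norm_num : (0:ℝ) < (3:ℝ)/2)]
        have := hK7 (t - k)
        have := hK5 (t - k)
        gcongr
      gcongr
      exact (abs_nonneg _).trans hMk
    have hdiff : ∀ᵐ k ∂(volume : Measure ℝ), k ∈ Set.uIoc (0:ℝ) T →
        ∀ t ∈ ball τ 1, HasDerivAt (fun t' => F t' k) (F' t k) t := by
      apply ae_of_all
      intro k _ t _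
      have h1 : HasDerivAt (fun t' : ℝ => t' - k) 1 t := (hasDerivAt_id t).sub_const k
      have h2 : HasDerivAt (fun t' => gk b 3 (t' - k))
          ((b * gk b 7 (t - k) - (3:ℝ)/2 * gk b 5 (t - k)) * 1) t := by
        have := (hasDerivAt_gk hb (by norm_num : (3:ℕ) ≠ 0) (t - k)).comp t h1
        norm_num at this ⊢
        exact this
      have h3 := (h2.const_mul (x - c)).const_mul (Ω k * C₀)
      refine h3.congr_deriv ?_
      symm
      show F' t k = _
      simp only [hF'def]
      ring
    exact (intervalIntegral.hasDerivAt_integral_of_dominated_loc_of_deriv_le (ball_mem_nhds τ one_pos)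
      (Filter.Eventually.of_forall fun t => (hFcont t).aestronglyMeasurable)
      ((hFcont τ).intervalIntegrable _ _)
      hF'cont.aestronglyMeasurable
      hbound intervalIntegrable_const hdiff).2
  have lhs_eq : deriv (fun t => q t x) τ = ∫ k in (0:ℝ)..T, F' τ k := by
    have hev : (fun t => q t x) =ᶠ[nhds τ] fun t => ∫ k in (0:ℝ)..T, F t k := by
      filter_upwards [Ioo_mem_nhds hτ hτT] with t ht
      exact hqT t ht.1 ht.2.le
    exact (key1.congr_of_eventuallyEq hev).deriv
  -- x-side setup
  set ρ : ℝ := |x - c| / 2 with hρdef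
  have hρ : 0 < ρ := by rw [hρdef]; positivity
  set b₀ : ℝ := (x - c) ^ 2 / (16 * σ ^ 2) with hb₀def
  have hb₀ : 0 < b₀ := by rw [hb₀def]; positivity
  have hBlb : ∀ y ∈ ball x ρ, b₀ ≤ B y ∧ (y - c) ^ 2 ≤ 4 * (x - c) ^ 2 := by
    intro y hy
    rw [mem_ball, Real.dist_eq] at hy
    have h1 : |x - c| - |y - c| ≤ |y - x| := by
      refine le_trans (abs_sub_abs_le_abs_sub _ _) ?_
      rw [show x - c - (y - c) = -(y - x) by ring, abs_neg]
    have h2 : |x - c| / 2 ≤ |y - c| := by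
      rw [hρdef] at hy
      linarith
    have h3 : (x - c) ^ 2 / 4 ≤ (y - c) ^ 2 := by
      have h4 : (|x - c| / 2) ^ 2 ≤ |y - c| ^ 2 :=
        pow_le_pow_left₀ (by positivity) h2 2
      rw [sq_abs] at h4
      nlinarith [sq_abs (x - c)]
    have h5 : (y - c) ^ 2 ≤ 4 * (x - c) ^ 2 := by
      have h7 : |y - c| ≤ |y - x| + |x - c| := by
        refine le_trans ?_ (abs_add_le (y - x) (x - c))
        rw [show y - x + (x - c) = y - c by ring]
      have h6 : |y - c| ≤ 2 * |x - c| := by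
        rw [hρdef] at hy
        linarith
      calc (y - c) ^ 2 = |y - c| ^ 2 := (sq_abs _).symm
        _ ≤ (2 * |x - c|) ^ 2 := pow_le_pow_left₀ (abs_nonneg _) h6 2
        _ = 4 * (x - c) ^ 2 := by rw [mul_pow, sq_abs]; norm_num
    refine ⟨?_, h5⟩
    show b₀ ≤ (y - c) ^ 2 / (4 * σ ^ 2)
    rw [hb₀def, div_le_div_iff₀ (by positivity) (by positivity)]
    nlinarith [h3, pow_pos hσ 2]
  have hBpos : ∀ y ∈ ball x ρ, 0 < B y := fun y hy => lt_of_lt_of_le hb₀ (hBlb y hy).1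
  have hqG : ∀ y ∈ ball x ρ, q τ y = ∫ k in (0:ℝ)..T, G y k := by
    intro y hy
    rw [hq τ y]
    have h1 : (fun k => Ω k * (y - c) / (4 * σ ^ 3 * Real.sqrt (π * (τ - k) ^ 3))
        * Real.exp (-(y - c) ^ 2 / (4 * σ ^ 2 * (τ - k)))) = G y := by
      funext k
      rw [hfg τ k y]
    rw [h1]
    rw [← intervalIntegral.integral_add_adjacent_intervals
      ((hGcont y (hBpos y hy)).intervalIntegrable 0 τ)
      ((hGcont y (hBpos y hy)).intervalIntegrable τ T)]
    have h2 : ∫ k in τ..T, G y k = 0 := by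
      have heq : Set.EqOn (G y) (fun _ => (0:ℝ)) (Set.uIcc τ T) := by
        intro k hk
        rw [Set.uIcc_of_le hτT.le] at hk
        show Ω k * C₀ * ((y - c) * gk (B y) 3 (τ - k)) = 0
        rw [gk_of_nonpos (B y) (by norm_num) (by linarith [hk.1])]
        ring
      rw [intervalIntegral.integral_congr heq]
      simp
    rw [h2, add_zero]
  -- pointwise derivatives in y
  have hBder : ∀ y : ℝ, HasDerivAt B ((2 * (y - c) ^ 1 * 1) / (4 * σ ^ 2)) y := fun y =>
    (((hasDerivAt_id y).sub_const c).pow 2).div_const (4 * σ ^ 2)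
  have hgB : ∀ (m : ℕ), m ≠ 0 → ∀ (y s : ℝ),
      HasDerivAt (fun y' => gk (B y') m s)
        (-(gk (B y) (m+2) s) * ((2 * (y - c) ^ 1 * 1) / (4 * σ ^ 2))) y :=
    fun m hm y s => (hasDerivAt_gk_b hm (B y) s).comp y (hBder y)
  have hGder : ∀ (y k : ℝ), HasDerivAt (fun y' => G y' k) (G' y k) y := by
    intro y k
    have h1 : HasDerivAt (fun y' : ℝ => y' - c) 1 y := (hasDerivAt_id y).sub_const c
    have h2 := hgB 3 (by norm_num) y (τ - k)
    have h3 := (h1.mul h2).const_mul (Ω k * C₀)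
    refine h3.congr_deriv ?_
    symm
    show G' y k = _
    simp only [hG'def]
    field_simp
    ring
  have hG'der : ∀ (y k : ℝ), HasDerivAt (fun y' => G' y' k) (G'' y k) y := by
    intro y k
    have h2 := hgB 3 (by norm_num) y (τ - k)
    have h5 := hgB 5 (by norm_num) y (τ - k)
    have hsq : HasDerivAt (fun y' : ℝ => (y' - c) ^ 2 / (2 * σ ^ 2))
        ((2 * (y - c) ^ 1 * 1) / (2 * σ ^ 2)) y :=
      (((hasDerivAt_id y).sub_const c).pow 2).div_const (2 * σ ^ 2)
    have h4 := hsq.mul h5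
    have h6 := (h2.sub h4).const_mul (Ω k * C₀)
    refine h6.congr_deriv ?_
    symm
    show G'' y k = _
    simp only [hG''def]
    field_simp
    ring
  -- bounds on the ball
  set K4 : ℝ := max 1 ((Nat.factorial 4 : ℝ) / b₀ ^ 4) with hK4def
  set K6 : ℝ := max 1 ((Nat.factorial 6 : ℝ) / b₀ ^ 6) with hK6def
  set K8 : ℝ := max 1 ((Nat.factorial 8 : ℝ) / b₀ ^ 8) with hK8def
  have hgK : ∀ y ∈ ball x ρ, ∀ s,
      gk (B y) 3 s ≤ K4 ∧ gk (B y) 5 s ≤ K6 ∧ gk (B y) 7 s ≤ K8 := fun y hy s =>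
    ⟨gk_bound hb₀ (hBlb y hy).1 (by norm_num) s,
      gk_bound hb₀ (hBlb y hy).1 (by norm_num) s,
      gk_bound hb₀ (hBlb y hy).1 (by norm_num) s⟩
  -- first derivative in x of the integral
  have hd1 : ∀ y₀ ∈ ball x ρ, HasDerivAt (fun y => ∫ k in (0:ℝ)..T, G y k)
      (∫ k in (0:ℝ)..T, G' y₀ k) y₀ := by
    intro y₀ hy₀
    have hε : 0 < ρ - dist y₀ x := by rw [mem_ball] at hy₀; linarith
    have hsubset : ball y₀ (ρ - dist y₀ x) ⊆ ball x ρ := by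
      intro z hz
      rw [mem_ball] at hz ⊢
      have := dist_triangle z y₀ x
      linarith
    have hbound : ∀ᵐ k ∂(volume : Measure ℝ), k ∈ Set.uIoc (0:ℝ) T →
        ∀ y ∈ ball y₀ (ρ - dist y₀ x),
          ‖G' y k‖ ≤ M * (C₀ * (K4 + 4 * (x - c) ^ 2 / (2 * σ ^ 2) * K6)) := by
      apply ae_of_all
      intro k hk y hy
      have hy' := hsubset hy
      have hkIcc : k ∈ Set.Icc 0 T := by
        rw [Set.uIoc_of_le hT.le] at hk
        exact ⟨hk.1.le, hk.2⟩
      have hMk := hM k hkIcc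
      rw [Real.norm_eq_abs] at hMk ⊢
      have habs : |G' y k| = |Ω k| * (C₀ *
          |gk (B y) 3 (τ - k) - (y - c) ^ 2 / (2 * σ ^ 2) * gk (B y) 5 (τ - k)|) := by
        show |Ω k * C₀ * _| = _
        rw [abs_mul, abs_mul, abs_of_pos hC₀]
        ring
      rw [habs]
      have hX : |gk (B y) 3 (τ - k) - (y - c) ^ 2 / (2 * σ ^ 2) * gk (B y) 5 (τ - k)|
          ≤ K4 + 4 * (x - c) ^ 2 / (2 * σ ^ 2) * K6 := by
        refine le_trans (abs_sub _ _) ?_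
        rw [abs_of_nonneg (gk_nonneg _ 3 _), abs_mul,
          abs_of_nonneg (by positivity : (0:ℝ) ≤ (y - c) ^ 2 / (2 * σ ^ 2)),
          abs_of_nonneg (gk_nonneg _ 5 _)]
        have h1 := (hgK y hy' (τ - k)).1
        have h2 := (hgK y hy' (τ - k)).2.1
        have h3 := (hBlb y hy').2
        gcongr
        exact gk_nonneg _ _ _
      gcongr
      exact (abs_nonneg _).trans hMk
    have hdiff : ∀ᵐ k ∂(volume : Measure ℝ), k ∈ Set.uIoc (0:ℝ) T →
        ∀ y ∈ ball y₀ (ρ - dist y₀ x), HasDerivAt (fun y' => G y' k) (G' y k) y := by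
      apply ae_of_all
      intro k _ y _
      exact hGder y k
    exact (intervalIntegral.hasDerivAt_integral_of_dominated_loc_of_deriv_le (ball_mem_nhds y₀ hε)
      (Filter.eventually_of_mem (isOpen_ball.mem_nhds hy₀) fun y hy =>
        (hGcont y (hBpos y hy)).aestronglyMeasurable)
      ((hGcont y₀ (hBpos y₀ hy₀)).intervalIntegrable _ _)
      ((hG'cont y₀ (hBpos y₀ hy₀)).aestronglyMeasurable)
      hbound intervalIntegrable_const hdiff).2
  -- second derivative in x of the integral
  have hd2 : HasDerivAt (fun y => ∫ k in (0:ℝ)..T, G' y k)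
      (∫ k in (0:ℝ)..T, G'' x k) x := by
    have hbound : ∀ᵐ k ∂(volume : Measure ℝ), k ∈ Set.uIoc (0:ℝ) T →
        ∀ y ∈ ball x ρ, ‖G'' y k‖ ≤ M * (C₀ * (2 * |x - c| *
          (4 * (x - c) ^ 2 / (4 * σ ^ 4) * K8 + 3 / (2 * σ ^ 2) * K6))) := by
      apply ae_of_all
      intro k hk y hy
      have hkIcc : k ∈ Set.Icc 0 T := by
        rw [Set.uIoc_of_le hT.le] at hk
        exact ⟨hk.1.le, hk.2⟩
      have hMk := hM k hkIcc
      rw [Real.norm_eq_abs] at hMk ⊢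
      have habs : |G'' y k| = |Ω k| * (C₀ * (|y - c| *
          |(y - c) ^ 2 / (4 * σ ^ 4) * gk (B y) 7 (τ - k)
            - 3 / (2 * σ ^ 2) * gk (B y) 5 (τ - k)|)) := by
        show |Ω k * C₀ * _| = _
        rw [abs_mul, abs_mul, abs_mul, abs_of_pos hC₀]
        ring
      rw [habs]
      have hyc : |y - c| ≤ 2 * |x - c| := by
        have h3 := (hBlb y hy).2
        nlinarith [sq_abs (y - c), sq_abs (x - c), abs_nonneg (y - c), abs_nonneg (x - c)]
      have hX : |(y - c) ^ 2 / (4 * σ ^ 4) * gk (B y) 7 (τ - k)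
            - 3 / (2 * σ ^ 2) * gk (B y) 5 (τ - k)|
          ≤ 4 * (x - c) ^ 2 / (4 * σ ^ 4) * K8 + 3 / (2 * σ ^ 2) * K6 := by
        refine le_trans (abs_sub _ _) ?_
        rw [abs_mul, abs_mul,
          abs_of_nonneg (by positivity : (0:ℝ) ≤ (y - c) ^ 2 / (4 * σ ^ 4)),
          abs_of_nonneg (gk_nonneg _ 7 _),
          abs_of_nonneg (by positivity : (0:ℝ) ≤ 3 / (2 * σ ^ 2)),
          abs_of_nonneg (gk_nonneg _ 5 _)]
        have h1 := (hgK y hy (τ - k)).2.2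
        have h2 := (hgK y hy (τ - k)).2.1
        have h3 := (hBlb y hy).2
        gcongr
        exact gk_nonneg _ _ _
      gcongr
      exact (abs_nonneg _).trans hMk
    have hdiff : ∀ᵐ k ∂(volume : Measure ℝ), k ∈ Set.uIoc (0:ℝ) T →
        ∀ y ∈ ball x ρ, HasDerivAt (fun y' => G' y' k) (G'' y k) y := by
      apply ae_of_all
      intro k _ y _
      exact hG'der y k
    exact (intervalIntegral.hasDerivAt_integral_of_dominated_loc_of_deriv_le (ball_mem_nhds x hρ)
      (Filter.eventually_of_mem (isOpen_ball.mem_nhds (mem_ball_self hρ)) fun y hy =>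
        (hG'cont y (hBpos y hy)).aestronglyMeasurable)
      ((hG'cont x (hBpos x (mem_ball_self hρ))).intervalIntegrable _ _)
      hG''cont.aestronglyMeasurable
      hbound intervalIntegrable_const hdiff).2
  -- assemble the right-hand side
  have e1 : ∀ y ∈ ball x ρ, deriv (fun x' => q τ x') y = ∫ k in (0:ℝ)..T, G' y k := by
    intro y hy
    have hev : (fun x' => q τ x') =ᶠ[nhds y] fun y' => ∫ k in (0:ℝ)..T, G y' k := by
      filter_upwards [isOpen_ball.mem_nhds hy] with z hz
      exact hqG z hz
    exact ((hd1 y hy).congr_of_eventuallyEq hev).deriv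
  have e2 : deriv (deriv (fun x' => q τ x')) x = ∫ k in (0:ℝ)..T, G'' x k := by
    have hev2 : deriv (fun x' => q τ x') =ᶠ[nhds x] fun y => ∫ k in (0:ℝ)..T, G' y k := by
      filter_upwards [isOpen_ball.mem_nhds (mem_ball_self hρ)] with z hz
      exact e1 z hz
    rw [Filter.EventuallyEq.deriv_eq hev2]
    exact hd2.deriv
  -- conclude
  rw [lhs_eq, e2, ← intervalIntegral.integral_const_mul]
  apply intervalIntegral.integral_congr
  intro k _
  show F' τ k = σ ^ 2 * G'' x k
  simp only [hF'def, hG''def, hbdef, hBdef]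
  field_simp
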